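/- Let t_k = (k, k−1, …, 1) ∈ S_n for 2 ≤ k ≤ n. If w = t_n^{c_n} t_{n−1}^{c_{n−1}} ⋯ t₂^{c₂} with 0 ≤ c_i < i, then maj(w) = c_n + c_{n−1} + ⋯ + c₂, where maj(w) is the sum of the descents of w. -/

import Mathlib

/-- `t_{i+1} = (i+1, i, …, 1)`, the cycle sending (0-indexed) `j ↦ j-1` for `1 ≤ j ≤ i`
and `0 ↦ i`, fixing everything above `i`. -/
def cycT {n : ℕ} (i : Fin n) : Equiv.Perm (Fin n) := (Fin.cycleRange i)⁻¹

/-- The major index: the sum of positions `i ∈ {1,…,n-1}` (1-indexed) where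
`w(i) > w(i+1)`. -/
def pmaj {n : ℕ} (w : Equiv.Perm (Fin n)) : ℕ :=
  ∑ i : Fin n, if h : i.1 + 1 < n then
    (if w ⟨i.1 + 1, h⟩ < w i then i.1 + 1 else 0) else 0

namespace Aux
variable {n : ℕ}

lemma cycT_eq_iff {i j x : Fin n} : cycT i j = x ↔ j = Fin.cycleRange i x :=
  Equiv.Perm.inv_eq_iff_eq

lemma cycT_of_lt {i j : Fin n} (h : i < j) : cycT i j = j := by
  rcases n with _ | m
  · exact i.elim0
  · rw [cycT_eq_iff, Fin.cycleRange_of_gt h]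

lemma cycT_zero {i j : Fin n} (hj : j.1 = 0) : cycT i j = i := by
  rcases n with _ | m
  · exact i.elim0
  · rw [cycT_eq_iff, Fin.cycleRange_self]; exact Fin.ext hj

lemma cycT_of_pos_le {i j : Fin n} (h0 : 0 < j.1) (h : j ≤ i) :
    (cycT i j).1 = j.1 - 1 := by
  rcases n with _ | m
  · exact i.elim0
  · have hj1 : j.1 - 1 < m + 1 := by omega
    have hle : j.1 ≤ i.1 := h
    have hlt : (⟨j.1 - 1, hj1⟩ : Fin (m+1)) < i := by
      simp only [Fin.lt_def]; omega
    have h1 : cycT i j = ⟨j.1 - 1, hj1⟩ := by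
      rw [cycT_eq_iff, Fin.cycleRange_of_lt hlt]
      apply Fin.ext
      simp only [Fin.add_def, Fin.val_one']
      have hm : 1 % (m+1) = 1 := Nat.mod_eq_of_lt (by omega)
      rw [hm, Nat.mod_eq_of_lt (by omega)]
      omega
    rw [h1]

end Aux

namespace Aux2
open Finset
variable {n : ℕ}

lemma maps_le {v : Equiv.Perm (Fin n)} {i : Fin n}
    (hfix : ∀ j, i < j → v j = j) : ∀ j, j ≤ i → v j ≤ i := by
  intro j hj
  by_contra hcon
  push_neg at hcon
  have h1 : v (v j) = v j := hfix _ hcon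
  have h2 : v j = j := v.injective h1
  rw [h2] at hcon
  exact absurd hj (not_le.mpr hcon)

lemma pmaj_step {i : Fin n} {v : Equiv.Perm (Fin n)}
    (hfix : ∀ j, i < j → v j = j) (hvi : (v i).1 ≠ 0) :
    pmaj (cycT i * v) = pmaj v + 1 := by
  have hn : 0 < n := i.pos
  set w := cycT i * v with hw
  have hi0 : 0 < i.1 := by
    have h := maps_le hfix i le_rfl
    rw [Fin.le_def] at h; omega
  set p : Fin n := v⁻¹ ⟨0, hn⟩ with hp
  have hvp : v p = ⟨0, hn⟩ := Equiv.apply_symm_apply v _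
  have hvpv : (v p).1 = 0 := by rw [hvp]
  have hple : p ≤ i := by
    by_contra hcon
    push_neg at hcon
    have h1 := hfix p hcon
    rw [hvp] at h1
    rw [Fin.lt_def, ← h1] at hcon
    simp at hcon
  have hpne : p ≠ i := by
    intro h
    rw [← h, hvpv] at hvi
    exact hvi rfl
  have hplt : p.1 < i.1 := lt_of_le_of_ne (Fin.le_def.mp hple) (fun h => hpne (Fin.ext h))
  have hvne0 : ∀ j : Fin n, j ≠ p → (v j).1 ≠ 0 := by
    intro j hj h0
    exact hj (v.injective (by rw [hvp]; exact Fin.ext h0))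
  have hvle : ∀ j : Fin n, j.1 ≤ i.1 → (v j).1 ≤ i.1 := by
    intro j hj; exact Fin.le_def.mp (maps_le hfix j (Fin.le_def.mpr hj))
  have hwfix : ∀ j : Fin n, i < j → w j = j := by
    intro j hj
    rw [hw, Equiv.Perm.mul_apply, hfix j hj, Aux.cycT_of_lt hj]
  have hwp : (w p).1 = i.1 := by
    rw [hw, Equiv.Perm.mul_apply, hvp, Aux.cycT_zero rfl]
  have hwval : ∀ j : Fin n, j ≠ p → j.1 ≤ i.1 → (w j).1 = (v j).1 - 1 := by
    intro j hjp hji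
    rw [hw, Equiv.Perm.mul_apply]
    exact Aux.cycT_of_pos_le (Nat.pos_of_ne_zero (hvne0 j hjp)) (Fin.le_def.mpr (hvle j hji))
  have hinj : ∀ j j' : Fin n, j ≠ j' → (v j).1 ≠ (v j').1 := by
    intro j j' hne h
    exact hne (v.injective (Fin.ext h))
  have key : ∀ j : Fin n, j ≠ p → j.1 + 1 ≠ p.1 →
      (if h : j.1 + 1 < n then (if w ⟨j.1+1,h⟩ < w j then j.1+1 else 0) else 0)
      = (if h : j.1 + 1 < n then (if v ⟨j.1+1,h⟩ < v j then j.1+1 else 0) else 0) := by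
    intro j hjp hjp1
    by_cases h : j.1 + 1 < n
    · simp only [dif_pos h]
      have hmk : ((⟨j.1+1, h⟩ : Fin n)).1 = j.1 + 1 := rfl
      have hiff : (w ⟨j.1+1,h⟩ < w j) ↔ (v ⟨j.1+1,h⟩ < v j) := by
        rcases lt_trichotomy j.1 i.1 with hc | hc | hc
        · have hj1p : (⟨j.1+1,h⟩ : Fin n) ≠ p := fun he => hjp1 (by rw [← he])
          have h1 := hwval j hjp (le_of_lt hc)
          have h2 := hwval ⟨j.1+1,h⟩ hj1p (by rw [hmk]; omega)
          have h3 := hvne0 j hjp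
          have h4 := hvne0 _ hj1p
          have h5 := hinj ⟨j.1+1,h⟩ j (fun he => by
            have := congrArg Fin.val he; rw [hmk] at this; omega)
          rw [Fin.lt_def, Fin.lt_def]
          omega
        · have hgt : i < (⟨j.1+1,h⟩ : Fin n) := by rw [Fin.lt_def, hmk]; omega
          have h1 : w ⟨j.1+1,h⟩ = ⟨j.1+1,h⟩ := hwfix _ hgt
          have h2 : v ⟨j.1+1,h⟩ = ⟨j.1+1,h⟩ := hfix _ hgt
          have h3 := hwval j hjp (le_of_eq hc)
          have h4 := hvle j (le_of_eq hc)
          rw [Fin.lt_def, Fin.lt_def, h1, h2, hmk]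
          omega
        · have hgt : i < j := Fin.lt_def.mpr hc
          have hgt1 : i < (⟨j.1+1,h⟩ : Fin n) := by rw [Fin.lt_def, hmk]; omega
          rw [hwfix _ hgt, hwfix _ hgt1, hfix _ hgt, hfix _ hgt1]
      rw [if_congr hiff rfl rfl]
    · simp only [dif_neg h]
  have hplt1 : p.1 + 1 < n := by omega
  have hpmk : ((⟨p.1+1, hplt1⟩ : Fin n)).1 = p.1 + 1 := rfl
  have hp1ne : (⟨p.1+1, hplt1⟩ : Fin n) ≠ p := by
    intro he; have := congrArg Fin.val he; rw [hpmk] at this; omega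
  have hFw_p : (if h : p.1 + 1 < n then (if w ⟨p.1+1,h⟩ < w p then p.1+1 else 0) else 0) = p.1 + 1 := by
    rw [dif_pos hplt1, if_pos]
    rw [Fin.lt_def, hwp, hwval _ hp1ne (by rw [hpmk]; omega)]
    have h1 := hvle ⟨p.1+1, hplt1⟩ (by rw [hpmk]; omega)
    have h2 := hvne0 _ hp1ne
    exact lt_of_lt_of_le (Nat.sub_lt (Nat.pos_of_ne_zero h2) one_pos) h1
  have hFv_p : (if h : p.1 + 1 < n then (if v ⟨p.1+1,h⟩ < v p then p.1+1 else 0) else 0) = 0 := by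
    rw [dif_pos hplt1, if_neg]
    rw [Fin.lt_def, hvpv]
    omega
  by_cases hp0 : p.1 = 0
  · have e1 : pmaj w = (∑ j ∈ univ.erase p, if h : j.1 + 1 < n then (if w ⟨j.1+1,h⟩ < w j then j.1+1 else 0) else 0) + (p.1+1) := by
      rw [pmaj, ← Finset.sum_erase_add _ _ (Finset.mem_univ p), hFw_p]
    have e2 : pmaj v = (∑ j ∈ univ.erase p, if h : j.1 + 1 < n then (if v ⟨j.1+1,h⟩ < v j then j.1+1 else 0) else 0) + 0 := by
      rw [pmaj, ← Finset.sum_erase_add _ _ (Finset.mem_univ p), hFv_p]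
    rw [e1, e2, Finset.sum_congr rfl (fun j hj => key j (Finset.mem_erase.mp hj).1 (by omega))]
    omega
  · set q : Fin n := ⟨p.1 - 1, by omega⟩ with hqdef
    have hqmk : q.1 = p.1 - 1 := rfl
    have hqp : q ≠ p := by
      intro he; have := congrArg Fin.val he; rw [hqmk] at this; omega
    have hq1 : q.1 + 1 = p.1 := by omega
    have hq1lt : q.1 + 1 < n := by omega
    have hq1eq : (⟨q.1+1, hq1lt⟩ : Fin n) = p := Fin.ext hq1
    have hFw_q : (if h : q.1 + 1 < n then (if w ⟨q.1+1,h⟩ < w q then q.1+1 else 0) else 0) = 0 := by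
      rw [dif_pos hq1lt, if_neg]
      rw [hq1eq, Fin.lt_def, hwp, hwval q hqp (by omega)]
      have h1 := hvle q (by omega)
      omega
    have hFv_q : (if h : q.1 + 1 < n then (if v ⟨q.1+1,h⟩ < v q then q.1+1 else 0) else 0) = q.1 + 1 := by
      rw [dif_pos hq1lt, if_pos]
      rw [hq1eq, Fin.lt_def, hvpv]
      have h1 := hvne0 q hqp
      omega
    have hq_mem : q ∈ univ.erase p := Finset.mem_erase.mpr ⟨hqp, Finset.mem_univ q⟩
    have e1 : pmaj w = ((∑ j ∈ (univ.erase p).erase q, if h : j.1 + 1 < n then (if w ⟨j.1+1,h⟩ < w j then j.1+1 else 0) else 0) + 0) + (p.1+1) := by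
      rw [pmaj, ← Finset.sum_erase_add _ _ (Finset.mem_univ p), ← Finset.sum_erase_add _ _ hq_mem, hFw_p, hFw_q]
    have e2 : pmaj v = ((∑ j ∈ (univ.erase p).erase q, if h : j.1 + 1 < n then (if v ⟨j.1+1,h⟩ < v j then j.1+1 else 0) else 0) + (q.1+1)) + 0 := by
      rw [pmaj, ← Finset.sum_erase_add _ _ (Finset.mem_univ p), ← Finset.sum_erase_add _ _ hq_mem, hFv_p, hFv_q]
    rw [e1, e2, Finset.sum_congr rfl (fun j hj => by
      have h1 := Finset.mem_erase.mp hj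
      have h2 := Finset.mem_erase.mp h1.2
      refine key j h2.1 (fun he => h1.1 (Fin.ext ?_))
      rw [hqmk]; omega)]
    omega

end Aux2
namespace Aux3
open Finset
variable {n : ℕ}

lemma cycT_pow_fix {i j : Fin n} (h : i < j) (c : ℕ) : (cycT i ^ c) j = j := by
  induction c with
  | zero => simp
  | succ c ih => rw [pow_succ, Equiv.Perm.mul_apply, Aux.cycT_of_lt h, ih]

lemma cycT_pow_self {i : Fin n} {c : ℕ} (hc : c ≤ i.1) : ((cycT i ^ c) i).1 = i.1 - c := by
  induction c with
  | zero => simp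
  | succ c ih =>
    have ih' := ih (by omega)
    rw [pow_succ', Equiv.Perm.mul_apply]
    have h0 : 0 < ((cycT i ^ c) i).1 := by omega
    have hle : (cycT i ^ c) i ≤ i := Fin.le_def.mpr (by omega)
    rw [Aux.cycT_of_pos_le h0 hle]
    omega

lemma pmaj_pow (i : Fin n) (u : Equiv.Perm (Fin n)) (hfix : ∀ j, i ≤ j → u j = j)
    (c : ℕ) (hc : c ≤ i.1) : pmaj (cycT i ^ c * u) = pmaj u + c := by
  induction c with
  | zero => simp
  | succ c ih =>
    have h1 : cycT i ^ (c+1) * u = cycT i * (cycT i ^ c * u) := by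
      rw [pow_succ', mul_assoc]
    have hfix' : ∀ j, i < j → (cycT i ^ c * u) j = j := by
      intro j hj
      rw [Equiv.Perm.mul_apply, hfix j (le_of_lt hj), cycT_pow_fix hj]
    have hvi : (((cycT i ^ c * u)) i).1 ≠ 0 := by
      rw [Equiv.Perm.mul_apply, hfix i le_rfl]
      have := cycT_pow_self (i := i) (c := c) (by omega)
      omega
    rw [h1, Aux2.pmaj_step hfix' hvi, ih (by omega)]
    omega

set_option maxHeartbeats 2000000 in
lemma main (k : ℕ) (hk : k ≤ n) (c : ∀ i : Fin n, Fin (i.1 + 1)) :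
    (∀ j : Fin n, k ≤ j.1 →
      ((List.ofFn fun j' : Fin k =>
        cycT (⟨k - 1 - j'.1, by omega⟩ : Fin n) ^ ((c ⟨k - 1 - j'.1, by omega⟩ : ℕ))).prod) j = j)
    ∧ pmaj ((List.ofFn fun j' : Fin k =>
        cycT (⟨k - 1 - j'.1, by omega⟩ : Fin n) ^ ((c ⟨k - 1 - j'.1, by omega⟩ : ℕ))).prod)
      = ∑ j' : Fin k, ((c (⟨k - 1 - j'.1, by omega⟩ : Fin n)) : ℕ) := by
  induction k with
  | zero =>
    constructor
    · intro j _; simp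
    · simp [pmaj, Fin.lt_def]
  | succ k ih =>
    have hk' : k ≤ n := Nat.le_of_succ_le hk
    obtain ⟨ihfix, ihmaj⟩ := ih hk'
    have hkn : k < n := hk
    have heq : (List.ofFn fun j' : Fin (k+1) =>
        cycT (⟨k + 1 - 1 - j'.1, by omega⟩ : Fin n) ^ ((c ⟨k + 1 - 1 - j'.1, by omega⟩ : ℕ)))
        = (cycT (⟨k, hkn⟩ : Fin n) ^ ((c ⟨k, hkn⟩ : ℕ))) ::
          (List.ofFn fun j' : Fin k =>
            cycT (⟨k - 1 - j'.1, by omega⟩ : Fin n) ^ ((c ⟨k - 1 - j'.1, by omega⟩ : ℕ))) := by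
      rw [List.ofFn_succ]
      congr 1
      congr 1
      funext j'
      have hv : (⟨k + 1 - 1 - (j'.succ).1, by omega⟩ : Fin n) = ⟨k - 1 - j'.1, by omega⟩ := by
        apply Fin.ext
        simp only [Fin.val_succ]
        omega
      rw [hv]
    rw [heq, List.prod_cons]
    have hkk : ((⟨k, hkn⟩ : Fin n)).1 = k := rfl
    have hcle : ((c ⟨k, hkn⟩ : ℕ)) ≤ k := by
      have h1 := (c ⟨k, hkn⟩).isLt
      omega
    constructor
    · intro j hj
      rw [Equiv.Perm.mul_apply, ihfix j (by omega),
        cycT_pow_fix (Fin.lt_def.mpr (by omega))]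
    · rw [pmaj_pow _ _ (fun j hj => ihfix j (Fin.le_def.mp hj)) _ hcle, ihmaj,
        Fin.sum_univ_succ]
      have hv : ∀ j' : Fin k, (⟨k + 1 - 1 - (j'.succ).1, by omega⟩ : Fin n) = ⟨k - 1 - j'.1, by omega⟩ := by
        intro j'
        apply Fin.ext
        simp only [Fin.val_succ]
        omega
      have hv0 : (⟨k + 1 - 1 - ((0 : Fin (k+1))).1, by omega⟩ : Fin n) = ⟨k, hkn⟩ := by
        apply Fin.ext
        simp
      conv_rhs => rw [Nat.add_comm]
      congr 1
      exact Finset.sum_congr rfl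
        (fun j' _ => (congrArg (fun x : Fin n => ((c x : ℕ))) (hv j')).symm)

end Aux3


set_option maxHeartbeats 2000000 in
/-- If `w = t_n^{c_n} t_{n-1}^{c_{n-1}} ⋯ t₂^{c₂}` with `0 ≤ c_i < i`,
then `maj(w) = c_n + c_{n-1} + ⋯ + c₂`. -/
theorem stmt9 (n : ℕ) (c : ∀ i : Fin n, Fin (i.1 + 1)) :
    pmaj ((List.ofFn fun j : Fin n => (cycT j.rev) ^ ((c j.rev : ℕ))).prod) =
      ∑ i : Fin n, (c i : ℕ) := by
  obtain ⟨-, h⟩ := Aux3.main n le_rfl c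
  have hfun : (fun j : Fin n => (cycT j.rev) ^ ((c j.rev : ℕ)))
      = fun j : Fin n => cycT (⟨n - 1 - j.1, by omega⟩ : Fin n) ^ ((c ⟨n - 1 - j.1, by omega⟩ : ℕ)) := by
    funext j
    have : j.rev = (⟨n - 1 - j.1, by omega⟩ : Fin n) := by
      apply Fin.ext
      rw [Fin.val_rev]
      show n - (j.1 + 1) = n - 1 - j.1
      omega
    rw [this]
  rw [hfun, h]
  have : ∀ j : Fin n, ((c (⟨n - 1 - j.1, by omega⟩ : Fin n)) : ℕ) = ((c j.rev : ℕ)) := by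
    intro j
    rw [show (⟨n - 1 - j.1, by omega⟩ : Fin n) = j.rev from
      Fin.ext (by rw [Fin.val_rev]; show n - 1 - j.1 = n - (j.1 + 1); omega)]
  rw [Finset.sum_congr rfl (fun j _ => this j)]
  exact Fintype.sum_equiv (Equiv.ofBijective Fin.rev Fin.rev_bijective) _ _ (fun j => rfl)
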